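/- Let n ≥ 1 be a natural number, h > 0 a real number, and L the n×n complex circulant matrix L = circulant c, where c : ZMod n → ℂ satisfies c 0 = 2/h², c 1 = −1/h², c (−1) = −1/h², and c j = 0 for all other j. If b : ZMod n → ℂ satisfies the compatibility condition Σ_j b j = 0, then there exists a unique x : ZMod n → ℂ with Σ_j x j = 0 and L.mulVec x = b. -/

import Mathlib

open Matrix Complex Real

private lemma const_of_step {n : ℕ} [NeZero n] (y : ZMod n → ℂ)
    (hy : ∀ i, y (i + 1) = y i) : ∀ i, y i = y 0 := by
  have key : ∀ k : ℕ, y (k : ZMod n) = y 0 := by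
    intro k
    induction k with
    | zero => simp
    | succ k ih =>
      have : ((k + 1 : ℕ) : ZMod n) = (k : ZMod n) + 1 := by push_cast; ring
      rw [this, hy, ih]
  intro i
  have := key i.val
  rwa [ZMod.natCast_zmod_val] at this

/-- The periodic Poisson problem is uniquely solvable on the zero-mean subspace:
if `Σ_j b j = 0`, there is a unique `x` with `Σ_j x j = 0` and `L x = b`. -/
theorem periodic_poisson_unique_zero_mean_solution
    (n : ℕ) [NeZero n] (hn : 1 ≤ n) (h : ℝ) (hh : 0 < h)
    (c : ZMod n → ℂ)
    (hc0 : c 0 = 2 / (h : ℂ) ^ 2)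
    (hc1 : c 1 = -1 / (h : ℂ) ^ 2)
    (hcm1 : c (-1) = -1 / (h : ℂ) ^ 2)
    (hcz : ∀ j : ZMod n, j ≠ 0 → j ≠ 1 → j ≠ -1 → c j = 0)
    (L : Matrix (ZMod n) (ZMod n) ℂ) (hL : L = Matrix.circulant c)
    (b : ZMod n → ℂ) (hb : ∑ j : ZMod n, b j = 0) :
    ∃! x : ZMod n → ℂ, (∑ j : ZMod n, x j = 0) ∧ L.mulVec x = b := by
  subst hL
  have hhC : ((h : ℂ) ^ 2) ≠ 0 := pow_ne_zero _ (Complex.ofReal_ne_zero.mpr hh.ne')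
  -- mulVec formula
  have hmv : ∀ (x : ZMod n → ℂ) (i : ZMod n),
      (circulant c).mulVec x i = ∑ j, c j * x (i - j) := by
    intro x i
    show ∑ j, c (i - j) * x j = _
    exact Fintype.sum_equiv (Equiv.subLeft i) _ _ (fun j => by simp)
  -- (A) L preserves the zero-sum condition (given zero-sum input)
  have hA : ∀ x : ZMod n → ℂ, (∑ j, x j = 0) →
      ∑ i, (circulant c).mulVec x i = 0 := by
    intro x hx
    have : ∑ i, (circulant c).mulVec x i = ∑ i, ∑ j, c (i - j) * x j := rfl
    rw [this, Finset.sum_comm]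
    have h2 : ∀ j : ZMod n, ∑ i, c (i - j) * x j = (∑ k, c k) * x j := by
      intro j
      rw [← Finset.sum_mul]
      congr 1
      exact Fintype.sum_equiv (Equiv.subRight j) _ _ (fun i => rfl)
    rw [Finset.sum_congr rfl fun j _ => h2 j, ← Finset.mul_sum, hx, mul_zero]
  -- (B) injectivity on zero-mean vectors
  have key : ∀ x : ZMod n → ℂ, (∑ j, x j = 0) →
      (circulant c).mulVec x = 0 → x = 0 := by
    intro x hx hLx
    have hLxi : ∀ i, ∑ j, c j * x (i - j) = 0 := by
      intro i; rw [← hmv x i, hLx]; rfl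
    rcases (by omega : n = 1 ∨ n = 2 ∨ 3 ≤ n) with h1 | h2 | h3
    · -- n = 1 : contradictory hypotheses
      exfalso
      subst h1
      have h10 : (1 : ZMod 1) = 0 := rfl
      rw [h10, hc0] at hc1
      field_simp at hc1
      rw [div_eq_iff hhC, neg_mul, one_div_mul_cancel hhC] at hc1
      norm_num at hc1
    · -- n = 2 : explicit computation
      subst h2
      have e0 := hLxi 0
      have e1 := hLxi 1
      have hsum2 : ∀ f : ZMod 2 → ℂ, ∑ j, f j = f 0 + f 1 := by
        intro f; exact Fin.sum_univ_two f
      rw [hsum2] at e0 e1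
      have hmeq : (-1 : ZMod 2) = 1 := rfl
      have h00 : (0 : ZMod 2) - 0 = 0 := rfl
      have h01 : (0 : ZMod 2) - 1 = 1 := rfl
      have h10' : (1 : ZMod 2) - 0 = 1 := rfl
      have h11 : (1 : ZMod 2) - 1 = 0 := rfl
      rw [h00, h01, hc0, hc1] at e0
      rw [h10', h11, hc0, hc1] at e1
      have hx0 : x 0 = 0 := by
        field_simp at e0 e1
        rw [div_eq_zero_iff, or_iff_left hhC] at e0 e1
        linear_combination (2 * e0 + e1) / 3
      have hx1 : x 1 = 0 := by
        field_simp at e0 e1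
        rw [div_eq_zero_iff, or_iff_left hhC] at e0 e1
        linear_combination (e0 + 2 * e1) / 3
      funext j
      fin_cases j
      · exact hx0
      · exact hx1
    · -- n ≥ 3 : the general case
      -- distinctness of 0, 1, -1
      have h10 : (1 : ZMod n) ≠ 0 := by
        intro hc
        have : (n : ℕ) ∣ 1 := by
          rw [← ZMod.natCast_eq_zero_iff]; exact_mod_cast hc
        have := Nat.le_of_dvd one_pos this
        omega
      have hm0 : (-1 : ZMod n) ≠ 0 := by
        intro hc; exact h10 (by rw [← neg_neg (1 : ZMod n), hc, neg_zero])
      have h1m : (1 : ZMod n) ≠ -1 := by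
        intro hc
        have h2' : ((2 : ℕ) : ZMod n) = 0 := by
          push_cast
          linear_combination hc
        have : n ∣ 2 := (ZMod.natCast_eq_zero_iff 2 n).mp h2'
        have := Nat.le_of_dvd two_pos this
        omega
      -- stencil expansion
      have expand : ∀ i : ZMod n,
          ∑ j, c j * x (i - j) = c 0 * x i + c 1 * x (i - 1) + c (-1) * x (i + 1) := by
        intro i
        have hterm : ∀ j : ZMod n, c j * x (i - j) =
            (if j = 0 then c 0 * x i else 0) + (if j = 1 then c 1 * x (i - 1) else 0) +
            (if j = -1 then c (-1) * x (i + 1) else 0) := by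
          intro j
          by_cases hj0 : j = 0
          · subst hj0; simp [h10.symm, hm0.symm, Ne.symm hm0]
          by_cases hj1 : j = 1
          · subst hj1; simp [h10, h1m]
          by_cases hjm : j = -1
          · subst hjm; simp [hm0, Ne.symm h1m, sub_neg_eq_add]
          · simp [hj0, hj1, hjm, hcz j hj0 hj1 hjm]
        rw [Finset.sum_congr rfl fun j _ => hterm j]
        rw [Finset.sum_add_distrib, Finset.sum_add_distrib]
        simp [Finset.sum_ite_eq']
      -- the discrete second differences vanish, so first differences are constant
      have hstep' : ∀ i : ZMod n, x (i + 1) - x i = x i - x (i - 1) := by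
        intro i
        have hEi := hLxi i
        rw [expand i, hc0, hc1, hcm1] at hEi
        field_simp at hEi
        rw [div_eq_zero_iff, or_iff_left hhC] at hEi
        linear_combination -hEi
      set d : ZMod n → ℂ := fun i => x (i + 1) - x i with hd
      have hdstep : ∀ i, d (i + 1) = d i := by
        intro i
        have := hstep' (i + 1)
        simpa [hd, add_sub_cancel_right] using this
      have hdconst := const_of_step d hdstep
      have hdsum : ∑ i, d i = 0 := by
        have h1' : ∑ i : ZMod n, x (i + 1) = ∑ i : ZMod n, x i :=
          Fintype.sum_equiv (Equiv.addRight 1) _ _ (fun i => rfl)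
        simp [hd, Finset.sum_sub_distrib, h1']
      have hNne : ((n : ℕ) : ℂ) ≠ 0 := Nat.cast_ne_zero.mpr (by omega)
      have hd0 : d 0 = 0 := by
        have hsd : ∑ i : ZMod n, d i = (n : ℂ) * d 0 := by
          rw [Finset.sum_congr rfl fun i _ => hdconst i]
          simp [Finset.card_univ, ZMod.card, mul_comm]
        rw [hdsum] at hsd
        exact (mul_eq_zero.mp hsd.symm).resolve_left hNne
      have hxstep : ∀ i, x (i + 1) = x i := by
        intro i
        have hdi := hdconst i
        rw [hd0] at hdi
        exact sub_eq_zero.mp hdi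
      have hxconst := const_of_step x hxstep
      have hx0 : x 0 = 0 := by
        have hsx : ∑ i : ZMod n, x i = (n : ℂ) * x 0 := by
          rw [Finset.sum_congr rfl fun i _ => hxconst i]
          simp [Finset.card_univ, ZMod.card, mul_comm]
        rw [hx] at hsx
        exact (mul_eq_zero.mp hsx.symm).resolve_left hNne
      funext i
      rw [hxconst i, hx0]
      rfl
  -- Linear algebra on the zero-mean subspace
  let K : Submodule ℂ (ZMod n → ℂ) :=
    { carrier := {x | ∑ j, x j = 0}
      add_mem' := by
        intro a b' ha hb'
        simp only [Set.mem_setOf_eq] at *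
        simp [Finset.sum_add_distrib, ha, hb']
      zero_mem' := by simp
      smul_mem' := by
        intro t x hx
        simp only [Set.mem_setOf_eq] at *
        simp [← Finset.mul_sum, hx] }
  let f : (ZMod n → ℂ) →ₗ[ℂ] (ZMod n → ℂ) := Matrix.mulVecLin (circulant c)
  have hmap : ∀ x ∈ K, f x ∈ K := by
    intro x hx
    exact hA x hx
  let g : K →ₗ[ℂ] K := f.restrict hmap
  have hginj : Function.Injective g := by
    rw [injective_iff_map_eq_zero]
    rintro ⟨x, hxK⟩ h0
    have hx0 : (circulant c).mulVec x = 0 := congrArg Subtype.val h0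
    exact Subtype.ext (key x hxK hx0)
  have hgsurj : Function.Surjective g :=
    (LinearMap.injective_iff_surjective).mp hginj
  obtain ⟨⟨x, hxK⟩, hgx⟩ := hgsurj ⟨b, hb⟩
  refine ⟨x, ⟨hxK, congrArg Subtype.val hgx⟩, ?_⟩
  rintro y ⟨hyK, hy⟩
  have hxK' : ∑ j : ZMod n, x j = 0 := hxK
  have hdiff : (∑ j, (y - x) j = 0) := by
    simp [Pi.sub_apply, Finset.sum_sub_distrib, hyK, hxK']
  have hLdiff : (circulant c).mulVec (y - x) = 0 := by
    have hx' : (circulant c).mulVec x = b := congrArg Subtype.val hgx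
    rw [Matrix.mulVec_sub, hy, hx', sub_self]
  have := key (y - x) hdiff hLdiff
  exact sub_eq_zero.mp this
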